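/- arXiv:2303.15044 — 3 statements merged into one kernel-verified Lean document; each statement's English description precedes it below -/
import Mathlib

section
/- Let y : [0,∞) → [0,∞) be differentiable with y'(t) + α y(t) ≤ G(t) for all t ≥ 0, where α > 0 and G : [0,∞) → [0,∞) is integrable on (0,∞). Then y(t) → 0 as t → ∞. -/
open MeasureTheory Set Filter

theorem stmt1 (y y' G : ℝ → ℝ) (α : ℝ) (hα : 0 < α)
    (hy : ∀ t, 0 ≤ t → 0 ≤ y t)
    (hderiv : ∀ t, 0 ≤ t → HasDerivAt y (y' t) t)
    (hG : ∀ t, 0 ≤ t → 0 ≤ G t)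
    (hGint : IntegrableOn G (Ioi (0:ℝ)))
    (hineq : ∀ t, 0 ≤ t → y' t + α * y t ≤ G t) :
    Tendsto y atTop (nhds 0) := by
  set C : ℝ := ∫ s in Ioi (0:ℝ), G s with hC
  have hGnn : ∀ u : ℝ, 0 ≤ u → 0 ≤ᵐ[volume.restrict (Ioi u)] G := by
    intro u hu
    refine (ae_restrict_iff' measurableSet_Ioi).2 (ae_of_all _ fun x hx => hG x ?_)
    exact le_trans hu hx.le
  have hGIu : ∀ u : ℝ, 0 ≤ u → IntegrableOn G (Ioi u) :=
    fun u hu => hGint.mono_set (Ioi_subset_Ioi hu)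
  have hGI : ∀ a b : ℝ, 0 ≤ a → a ≤ b → IntervalIntegrable G volume a b := by
    intro a b ha hab
    rw [intervalIntegrable_iff_integrableOn_Ioc_of_le hab]
    exact hGint.mono_set fun x hx => lt_of_le_of_lt ha hx.1
  have hexpc : Continuous fun s : ℝ => Real.exp (α * s) :=
    Real.continuous_exp.comp (continuous_const.mul continuous_id)
  have hφI : ∀ a b : ℝ, 0 ≤ a → a ≤ b →
      IntervalIntegrable (fun s => Real.exp (α * s) * G s) volume a b :=
    fun a b ha hab => (hGI a b ha hab).continuousOn_mul hexpc.continuousOn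
  -- tail integrals
  have htail_nn : ∀ u : ℝ, 0 ≤ u → 0 ≤ ∫ s in Ioi u, G s := by
    intro u hu
    exact setIntegral_nonneg measurableSet_Ioi fun x hx => hG x (le_trans hu hx.le)
  have hCnn : 0 ≤ C := htail_nn 0 le_rfl
  have htail : ∀ u : ℝ, 0 ≤ u → ∫ s in Ioi u, G s ≤ C - ∫ s in (0:ℝ)..u, G s := by
    intro u hu
    have hsplit : (∫ s in Ioc 0 u, G s) + ∫ s in Ioi u, G s = C := by
      rw [hC, ← Ioc_union_Ioi_eq_Ioi hu]
      exact (setIntegral_union (Ioc_disjoint_Ioi le_rfl) measurableSet_Ioi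
        (hGint.mono_set Ioc_subset_Ioi_self) (hGIu u hu)).symm
    rw [intervalIntegral.integral_of_le hu]
    linarith
  -- key Gronwall-type estimate
  have key : ∀ t : ℝ, 0 ≤ t →
      y t ≤ Real.exp (-(α * t)) * y 0
        + Real.exp (-(α * t)) * ∫ s in (0:ℝ)..t, Real.exp (α * s) * G s := by
    intro t ht
    have hf : ∀ x : ℝ, 0 ≤ x → HasDerivAt (fun s => Real.exp (α * s) * y s)
        (Real.exp (α * x) * α * y x + Real.exp (α * x) * y' x) x := by
      intro x hx
      have h1 : HasDerivAt (fun s : ℝ => Real.exp (α * s)) (Real.exp (α * x) * α) x := by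
        simpa using ((hasDerivAt_id x).const_mul α).exp
      exact h1.mul (hderiv x hx)
    have hcont : ContinuousOn (fun s => Real.exp (α * s) * y s) (Icc 0 t) := by
      intro x hx
      exact ((hf x hx.1).continuousAt).continuousWithinAt
    have hφint : IntegrableOn (fun s => Real.exp (α * s) * G s) (Icc 0 t) := by
      have : IntegrableOn G (Icc 0 t) := by
        rw [integrableOn_Icc_iff_integrableOn_Ioc]
        exact hGint.mono_set Ioc_subset_Ioi_self
      exact this.continuousOn_mul hexpc.continuousOn isCompact_Icc
    have hmain := intervalIntegral.sub_le_integral_of_hasDeriv_right_of_le ht hcont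
      (g' := fun x => Real.exp (α * x) * α * y x + Real.exp (α * x) * y' x)
      (fun x hx => (hf x hx.1.le).hasDerivWithinAt)
      hφint
      (fun x hx => by
        have h1 := hineq x hx.1.le
        have hexp : (0:ℝ) ≤ Real.exp (α * x) := (Real.exp_pos _).le
        have h := mul_le_mul_of_nonneg_left h1 hexp
        calc Real.exp (α * x) * α * y x + Real.exp (α * x) * y' x
            = Real.exp (α * x) * (y' x + α * y x) := by ring
          _ ≤ Real.exp (α * x) * G x := h)
    -- hmain : exp(αt) y t - exp 0 * y 0 ≤ ∫
    have h0 : Real.exp (α * 0) * y 0 = y 0 := by simp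
    have h2 : Real.exp (α * t) * y t ≤ y 0 + ∫ s in (0:ℝ)..t, Real.exp (α * s) * G s := by
      have := hmain
      rw [h0] at this
      linarith
    have h3 := mul_le_mul_of_nonneg_left h2 (Real.exp_pos (-(α * t))).le
    calc y t = Real.exp (-(α * t)) * (Real.exp (α * t) * y t) := by
              rw [← mul_assoc, ← Real.exp_add]; simp
      _ ≤ Real.exp (-(α * t)) * (y 0 + ∫ s in (0:ℝ)..t, Real.exp (α * s) * G s) := h3
      _ = _ := by ring
  -- bound the integral term
  have key2 : ∀ t : ℝ, 0 ≤ t →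
      Real.exp (-(α * t)) * (∫ s in (0:ℝ)..t, Real.exp (α * s) * G s)
        ≤ Real.exp (-(α * (t / 2))) * C + (C - ∫ s in (0:ℝ)..(t / 2), G s) := by
    intro t ht
    set u : ℝ := t / 2 with hu
    have hu0 : 0 ≤ u := by positivity
    have hut : u ≤ t := by rw [hu]; linarith
    have hsplit : (∫ s in (0:ℝ)..t, Real.exp (α * s) * G s)
        = (∫ s in (0:ℝ)..u, Real.exp (α * s) * G s) + ∫ s in u..t, Real.exp (α * s) * G s :=
      (intervalIntegral.integral_add_adjacent_intervals (hφI 0 u le_rfl hu0)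
        (hφI u t hu0 hut)).symm
    have hA : (∫ s in (0:ℝ)..u, Real.exp (α * s) * G s) ≤ Real.exp (α * u) * C := by
      have h1 : (∫ s in (0:ℝ)..u, Real.exp (α * s) * G s)
          ≤ ∫ s in (0:ℝ)..u, Real.exp (α * u) * G s := by
        refine intervalIntegral.integral_mono_on hu0 (hφI 0 u le_rfl hu0)
          ((hGI 0 u le_rfl hu0).const_mul _) fun x hx => ?_
        have : Real.exp (α * x) ≤ Real.exp (α * u) :=
          Real.exp_le_exp.2 (mul_le_mul_of_nonneg_left hx.2 hα.le)
        exact mul_le_mul_of_nonneg_right this (hG x hx.1)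
      have h2 : (∫ s in (0:ℝ)..u, G s) ≤ C := by
        rw [intervalIntegral.integral_of_le hu0, hC]
        exact setIntegral_mono_set hGint (hGnn 0 le_rfl) Ioc_subset_Ioi_self.eventuallyLE
      calc (∫ s in (0:ℝ)..u, Real.exp (α * s) * G s)
          ≤ ∫ s in (0:ℝ)..u, Real.exp (α * u) * G s := h1
        _ = Real.exp (α * u) * ∫ s in (0:ℝ)..u, G s := by
              rw [intervalIntegral.integral_const_mul]
        _ ≤ Real.exp (α * u) * C :=
              mul_le_mul_of_nonneg_left h2 (Real.exp_pos _).le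
    have hB : (∫ s in u..t, Real.exp (α * s) * G s) ≤ Real.exp (α * t) * ∫ s in Ioi u, G s := by
      have h1 : (∫ s in u..t, Real.exp (α * s) * G s)
          ≤ ∫ s in u..t, Real.exp (α * t) * G s := by
        refine intervalIntegral.integral_mono_on hut (hφI u t hu0 hut)
          ((hGI u t hu0 hut).const_mul _) fun x hx => ?_
        have : Real.exp (α * x) ≤ Real.exp (α * t) :=
          Real.exp_le_exp.2 (mul_le_mul_of_nonneg_left hx.2 hα.le)
        exact mul_le_mul_of_nonneg_right this (hG x (le_trans hu0 hx.1))
      have h2 : (∫ s in u..t, G s) ≤ ∫ s in Ioi u, G s := by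
        rw [intervalIntegral.integral_of_le hut]
        exact setIntegral_mono_set (hGIu u hu0) (hGnn u hu0) Ioc_subset_Ioi_self.eventuallyLE
      calc (∫ s in u..t, Real.exp (α * s) * G s)
          ≤ ∫ s in u..t, Real.exp (α * t) * G s := h1
        _ = Real.exp (α * t) * ∫ s in u..t, G s := by
              rw [intervalIntegral.integral_const_mul]
        _ ≤ Real.exp (α * t) * ∫ s in Ioi u, G s :=
              mul_le_mul_of_nonneg_left h2 (Real.exp_pos _).le
    have hexp1 : Real.exp (-(α * t)) * Real.exp (α * u) = Real.exp (-(α * u)) := by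
      rw [← Real.exp_add]; congr 1; rw [hu]; ring
    have hexp2 : Real.exp (-(α * t)) * Real.exp (α * t) = 1 := by
      rw [← Real.exp_add]; simp
    have htailu := htail u hu0
    have htnn := htail_nn u hu0
    calc Real.exp (-(α * t)) * (∫ s in (0:ℝ)..t, Real.exp (α * s) * G s)
        = Real.exp (-(α * t)) * ((∫ s in (0:ℝ)..u, Real.exp (α * s) * G s)
            + ∫ s in u..t, Real.exp (α * s) * G s) := by rw [hsplit]
      _ ≤ Real.exp (-(α * t)) * (Real.exp (α * u) * C
            + Real.exp (α * t) * ∫ s in Ioi u, G s) := by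
            exact mul_le_mul_of_nonneg_left (add_le_add hA hB) (Real.exp_pos _).le
      _ = Real.exp (-(α * u)) * C + ∫ s in Ioi u, G s := by
            rw [mul_add, ← mul_assoc, ← mul_assoc, hexp1, hexp2, one_mul]
      _ ≤ Real.exp (-(α * u)) * C + (C - ∫ s in (0:ℝ)..u, G s) := by linarith
  -- the bounding function tends to 0
  have hB0 : Tendsto (fun t : ℝ => Real.exp (-(α * t)) * y 0
      + (Real.exp (-(α * (t / 2))) * C + (C - ∫ s in (0:ℝ)..(t / 2), G s)))
      atTop (nhds 0) := by
    have hmulTop : Tendsto (fun t : ℝ => α * t) atTop atTop :=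
      Tendsto.const_mul_atTop hα tendsto_id
    have he1 : Tendsto (fun t : ℝ => Real.exp (-(α * t))) atTop (nhds 0) :=
      Real.tendsto_exp_neg_atTop_nhds_zero.comp hmulTop
    have hdiv : Tendsto (fun t : ℝ => t / 2) atTop atTop :=
      tendsto_id.atTop_div_const (by norm_num)
    have he2 : Tendsto (fun t : ℝ => Real.exp (-(α * (t / 2)))) atTop (nhds 0) :=
      Real.tendsto_exp_neg_atTop_nhds_zero.comp (hmulTop.comp hdiv)
    have hint : Tendsto (fun t : ℝ => ∫ s in (0:ℝ)..(t / 2), G s) atTop (nhds C) :=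
      (intervalIntegral_tendsto_integral_Ioi 0 hGint tendsto_id).comp hdiv
    have h3 : Tendsto (fun t : ℝ => C - ∫ s in (0:ℝ)..(t / 2), G s) atTop (nhds 0) := by
      have := (tendsto_const_nhds (x := C) (f := atTop)).sub hint
      simpa using this
    have := (he1.mul_const (y 0)).add ((he2.mul_const C).add h3)
    simpa using this
  -- squeeze
  refine squeeze_zero' ?_ ?_ hB0
  · filter_upwards [eventually_ge_atTop (0:ℝ)] with t ht using hy t ht
  · filter_upwards [eventually_ge_atTop (0:ℝ)] with t ht
    exact le_trans (key t ht) (by linarith [key2 t ht])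
end

section
/- Let y : [0,∞) → [0,∞) be differentiable, α > 0, and f, g ∈ L²(0,∞) nonnegative, with y'(t) + α y(t) ≤ c f(t) g(t) for all t ≥ 0 and some c > 0. Then lim_{t→∞} y(t) = 0. -/
set_option maxHeartbeats 1000000


open MeasureTheory Set Filter

theorem stmt8 (y y' f g : ℝ → ℝ) (α c : ℝ) (hα : 0 < α) (hc : 0 < c)
    (hy : ∀ t, 0 ≤ t → 0 ≤ y t)
    (hderiv : ∀ t, 0 ≤ t → HasDerivAt y (y' t) t)
    (hfm : Measurable f) (hgm : Measurable g)
    (hfnn : ∀ t, 0 ≤ t → 0 ≤ f t) (hgnn : ∀ t, 0 ≤ t → 0 ≤ g t)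
    (hf2 : IntegrableOn (fun s => (f s) ^ 2) (Ioi (0:ℝ)))
    (hg2 : IntegrableOn (fun s => (g s) ^ 2) (Ioi (0:ℝ)))
    (hineq : ∀ t, 0 ≤ t → y' t + α * y t ≤ c * f t * g t) :
    Tendsto y atTop (nhds 0) := by
  set h : ℝ → ℝ := fun s => c * f s * g s with hh
  have hmeas : Measurable h := (measurable_const.mul hfm).mul hgm
  have hnn : ∀ s, 0 ≤ s → 0 ≤ h s := fun s hs =>
    mul_nonneg (mul_nonneg hc.le (hfnn s hs)) (hgnn s hs)
  have hInt : IntegrableOn h (Ioi 0) := by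
    refine Integrable.mono' ((hf2.add hg2).const_mul (c / 2))
      hmeas.aestronglyMeasurable.restrict ?_
    filter_upwards [ae_restrict_mem measurableSet_Ioi] with s hs
    have hf := hfnn s hs.le
    have hg := hgnn s hs.le
    rw [Real.norm_eq_abs, abs_of_nonneg (hnn s hs.le)]
    have h1 : f s * g s ≤ (f s ^ 2 + g s ^ 2) / 2 := by nlinarith [sq_nonneg (f s - g s)]
    have : h s = c * (f s * g s) := by rw [hh]; ring
    rw [this]
    simp only [Pi.add_apply]
    nlinarith [mul_le_mul_of_nonneg_left h1 hc.le]
  have hIcc : ∀ a b : ℝ, 0 ≤ a → IntegrableOn h (Icc a b) := by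
    intro a b ha
    rw [integrableOn_Icc_iff_integrableOn_Ioc]
    exact hInt.mono_set (fun x hx => lt_of_le_of_lt ha hx.1)
  have hII : ∀ a b : ℝ, 0 ≤ a → a ≤ b → IntervalIntegrable h volume a b := by
    intro a b ha hab
    have huicc : IntegrableOn h (uIcc a b) := by rw [uIcc_of_le hab]; exact hIcc a b ha
    exact huicc.intervalIntegrable
  -- Key Grönwall-type estimate
  have key : ∀ a b : ℝ, 0 ≤ a → a ≤ b →
      y b ≤ y a * Real.exp (α * a - α * b) + ∫ s in a..b, h s := by
    intro a b ha hab
    have hEb : (0:ℝ) < Real.exp (α * b) := Real.exp_pos _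
    have main : y b * Real.exp (α * b) - y a * Real.exp (α * a) ≤
        ∫ s in a..b, Real.exp (α * b) * h s := by
      apply intervalIntegral.sub_le_integral_of_hasDeriv_right_of_le hab
        (g := fun t => y t * Real.exp (α * t))
        (g' := fun t => y' t * Real.exp (α * t) + y t * (Real.exp (α * t) * (α * 1)))
      · intro t ht
        have h0t : 0 ≤ t := ha.trans ht.1
        exact ((hderiv t h0t).continuousAt.mul
          (Real.continuous_exp.comp (continuous_const.mul continuous_id)).continuousAt).continuousWithinAt
      · intro x hx
        have h0x : 0 ≤ x := ha.trans hx.1.le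
        exact ((hderiv x h0x).mul (((hasDerivAt_id x).const_mul α).exp)).hasDerivWithinAt
      · exact ((hIcc a b ha).const_mul _)
      · intro x hx
        have h0x : 0 ≤ x := ha.trans hx.1.le
        have hE : Real.exp (α * x) ≤ Real.exp (α * b) :=
          Real.exp_le_exp.2 (by nlinarith [hx.2])
        have hEx : (0:ℝ) < Real.exp (α * x) := Real.exp_pos _
        have h1 := hineq x h0x
        have h2 := hnn x h0x
        calc y' x * Real.exp (α * x) + y x * (Real.exp (α * x) * (α * 1))
            = (y' x + α * y x) * Real.exp (α * x) := by ring
          _ ≤ h x * Real.exp (α * x) := by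
              apply mul_le_mul_of_nonneg_right _ hEx.le
              simpa [hh] using h1
          _ ≤ Real.exp (α * b) * h x := by
              rw [mul_comm]
              exact mul_le_mul_of_nonneg_right hE h2
    rw [intervalIntegral.integral_const_mul] at main
    have hE : Real.exp (α * a - α * b) * Real.exp (α * b) = Real.exp (α * a) := by
      rw [← Real.exp_add]; ring_nf
    have h5 : y b * Real.exp (α * b) ≤
        (y a * Real.exp (α * a - α * b) + ∫ s in a..b, h s) * Real.exp (α * b) := by
      calc y b * Real.exp (α * b)
          ≤ y a * Real.exp (α * a) + Real.exp (α * b) * ∫ s in a..b, h s := by linarith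
        _ = (y a * Real.exp (α * a - α * b) + ∫ s in a..b, h s) * Real.exp (α * b) := by
            linear_combination (-(y a)) * hE
    exact le_of_mul_le_mul_right h5 hEb
  -- the map T ↦ ∫_0^T h tends to I := ∫_{Ioi 0} h
  set I : ℝ := ∫ s in Ioi 0, h s with hI
  have htend : Tendsto (fun T : ℝ => ∫ s in (0:ℝ)..T, h s) atTop (nhds I) :=
    intervalIntegral_tendsto_integral_Ioi 0 hInt tendsto_id
  have hle : ∀ b : ℝ, 0 ≤ b → (∫ s in (0:ℝ)..b, h s) ≤ I := by
    intro b hb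
    rw [intervalIntegral.integral_of_le hb]
    apply setIntegral_mono_set hInt
    · filter_upwards [ae_restrict_mem measurableSet_Ioi] with s hs using hnn s hs.le
    · exact Eventually.of_forall Ioc_subset_Ioi_self
  rw [Metric.tendsto_atTop]
  intro ε hε
  obtain ⟨T, hT0, hTclose⟩ : ∃ T : ℝ, 0 ≤ T ∧ |(∫ s in (0:ℝ)..T, h s) - I| < ε / 3 := by
    obtain ⟨N, hN⟩ := Metric.tendsto_atTop.1 htend (ε/3) (by linarith)
    exact ⟨max N 0, le_max_right _ _,
      by simpa [Real.dist_eq] using hN (max N 0) (le_max_left _ _)⟩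
  have h2 : Tendsto (fun b : ℝ => α * T - α * b) atTop atBot := by
    have h3 : Tendsto (fun b : ℝ => α * b) atTop atTop :=
      Tendsto.const_mul_atTop hα tendsto_id
    have h4 : Tendsto (fun b : ℝ => -(α * b)) atTop atBot :=
      tendsto_neg_atTop_atBot.comp h3
    simpa [sub_eq_add_neg] using tendsto_atBot_add_const_left atTop (α * T) h4
  have hdecay : Tendsto (fun b : ℝ => y T * Real.exp (α * T - α * b)) atTop (nhds 0) := by
    have := (Real.tendsto_exp_atBot.comp h2).const_mul (y T)
    simpa using this
  obtain ⟨N, hN⟩ := Metric.tendsto_atTop.1 hdecay (ε/3) (by linarith)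
  refine ⟨max N T, fun b hb => ?_⟩
  have hbT : T ≤ b := le_trans (le_max_right _ _) hb
  have hb0 : 0 ≤ b := hT0.trans hbT
  have hyb : 0 ≤ y b := hy b hb0
  have hsplit : (∫ s in (0:ℝ)..T, h s) + (∫ s in T..b, h s) = ∫ s in (0:ℝ)..b, h s :=
    intervalIntegral.integral_add_adjacent_intervals (hII 0 T le_rfl hT0) (hII T b hT0 hbT)
  have htail : (∫ s in T..b, h s) < ε / 3 := by
    have := hle b hb0
    have habs := abs_lt.1 hTclose
    linarith
  have hexp : y T * Real.exp (α * T - α * b) < ε / 3 := by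
    have := hN b (le_trans (le_max_left _ _) hb)
    rw [Real.dist_eq, sub_zero] at this
    exact lt_of_le_of_lt (le_abs_self _) this
  have hkey := key T b hT0 hbT
  rw [Real.dist_eq, sub_zero, abs_of_nonneg hyb]
  linarith
end

section
/- Let y : [0,∞) → [0,∞) be differentiable with y'(t) + 2M y(t) ≤ h(t), where M > 0 and h ≥ 0 is integrable on (0,∞). Then y is bounded on [0,∞) by y(0) + ∫₀^∞ h(s) ds, and y(t) → 0 as t → ∞. -/
open MeasureTheory Set Filter

theorem stmt14 (y y' h : ℝ → ℝ) (M : ℝ) (hM : 0 < M)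
    (hy : ∀ t, 0 ≤ t → 0 ≤ y t)
    (hderiv : ∀ t, 0 ≤ t → HasDerivAt y (y' t) t)
    (hhnn : ∀ t, 0 ≤ t → 0 ≤ h t)
    (hhint : IntegrableOn h (Ioi (0:ℝ)))
    (hineq : ∀ t, 0 ≤ t → y' t + 2 * M * y t ≤ h t) :
    (∀ t, 0 ≤ t → y t ≤ y 0 + ∫ s in Ioi (0:ℝ), h s) ∧
      Tendsto y atTop (nhds 0) := by
  have ycont : ∀ a b : ℝ, 0 ≤ a → ContinuousOn y (Icc a b) := by
    intro a b ha
    intro x hx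
    exact ((hderiv x (ha.trans hx.1)).continuousAt).continuousWithinAt
  have yint : ∀ a b : ℝ, 0 ≤ a → IntegrableOn y (Ioc a b) := by
    intro a b ha
    exact ((ycont a b ha).integrableOn_Icc).mono_set Ioc_subset_Icc_self
  have hint' : ∀ a b : ℝ, 0 ≤ a → IntegrableOn h (Ioc a b) := by
    intro a b ha
    exact hhint.mono_set (fun x hx => lt_of_le_of_lt ha hx.1)
  have hnnae : ∀ a : ℝ, 0 ≤ a → 0 ≤ᵐ[volume.restrict (Ioi a)] h := by
    intro a ha
    exact (ae_restrict_iff' measurableSet_Ioi).2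
      (Filter.Eventually.of_forall fun x hx => hhnn x (ha.trans hx.le))
  -- Key differential inequality integrated
  have key : ∀ a b : ℝ, 0 ≤ a → a ≤ b →
      y b - y a ≤ ∫ t in Ioc a b, (h t - 2 * M * y t) := by
    intro a b ha hab
    have hφint : IntegrableOn (fun t => h t - 2 * M * y t) (Icc a b) := by
      have h1 : IntegrableOn h (Icc a b) := by
        rw [integrableOn_Icc_iff_integrableOn_Ioc]
        exact hint' a b ha
      exact h1.sub (((ycont a b ha).integrableOn_Icc).const_mul (2 * M))
    have := intervalIntegral.sub_le_integral_of_hasDeriv_right_of_le hab (ycont a b ha)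
      (fun x hx => ((hderiv x (ha.trans hx.1.le)).hasDerivWithinAt))
      hφint (fun x hx => by linarith [hineq x (ha.trans hx.1.le)])
    rwa [intervalIntegral.integral_of_le hab] at this
  -- monotone-type estimate: y b ≤ y a + ∫_{(a,b]} h
  have key2 : ∀ a b : ℝ, 0 ≤ a → a ≤ b → y b ≤ y a + ∫ t in Ioc a b, h t := by
    intro a b ha hab
    have h1 := key a b ha hab
    have h2 : ∫ t in Ioc a b, (h t - 2 * M * y t) ≤ ∫ t in Ioc a b, h t := by
      apply setIntegral_mono_on
      · exact (hint' a b ha).sub ((yint a b ha).const_mul (2 * M))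
      · exact hint' a b ha
      · exact measurableSet_Ioc
      · intro x hx
        have := hy x (ha.trans hx.1.le)
        nlinarith
    linarith
  -- tail estimate
  have tail : ∀ a b T : ℝ, 0 ≤ T → T ≤ a →
      ∫ t in Ioc a b, h t ≤ ∫ t in Ioi T, h t := by
    intro a b T hT hTa
    apply setIntegral_mono_set (hhint.mono_set (fun x hx => lt_of_le_of_lt hT hx))
      (hnnae T hT)
    exact HasSubset.Subset.eventuallyLE (fun x hx => lt_of_le_of_lt hTa hx.1)
  have bound : ∀ t, 0 ≤ t → y t ≤ y 0 + ∫ s in Ioi (0:ℝ), h s := by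
    intro t ht
    have := key2 0 t le_rfl ht
    have := tail 0 t 0 le_rfl le_rfl
    linarith
  refine ⟨bound, ?_⟩
  set B : ℝ := y 0 + ∫ s in Ioi (0:ℝ), h s with hB
  have hB0 : 0 ≤ B := le_trans (hy 0 le_rfl) (bound 0 le_rfl)
  -- integral of y is bounded
  have intybound : ∀ b : ℝ, 0 ≤ b → ∫ t in Ioc 0 b, y t ≤ B / (2 * M) := by
    intro b hb
    have h1 := key 0 b le_rfl hb
    have hsplit : ∫ t in Ioc 0 b, (h t - 2 * M * y t)
        = (∫ t in Ioc 0 b, h t) - ∫ t in Ioc 0 b, 2 * M * y t :=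
      integral_sub (hint' 0 b le_rfl) ((yint 0 b le_rfl).const_mul (2 * M))
    have h2 : ∫ t in Ioc 0 b, 2 * M * y t = 2 * M * ∫ t in Ioc 0 b, y t :=
      integral_const_mul (2 * M) y
    have h3 := tail 0 b 0 le_rfl le_rfl
    have h4 := hy b hb
    have h5 : 2 * M * ∫ t in Ioc 0 b, y t ≤ B := by
      rw [hB]; rw [hsplit, h2] at h1; linarith
    have hM2 : (0:ℝ) < 2 * M := by linarith
    rw [le_div_iff₀ hM2, mul_comm]
    exact h5
  -- there exist arbitrarily large times with small y
  have small : ∀ T ε : ℝ, 0 ≤ T → 0 < ε → ∃ t, T ≤ t ∧ y t < ε := by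
    intro T ε hT hε
    by_contra hcon
    push_neg at hcon
    set b : ℝ := T + (B / (2 * M) + 1) / ε with hb
    have hbT : T ≤ b := by
      have h0 : 0 ≤ (B / (2 * M) + 1) / ε := by positivity
      rw [hb]
      linarith
    have hb0 : 0 ≤ b := hT.trans hbT
    have hconst : ∫ t in Ioc T b, (ε : ℝ) ≤ ∫ t in Ioc T b, y t := by
      apply setIntegral_mono_on
      · exact integrableOn_const measure_Ioc_lt_top.ne
      · exact yint T b hT
      · exact measurableSet_Ioc
      · intro x hx; exact hcon x hx.1.le
    have hval : ∫ t in Ioc T b, (ε : ℝ) = ε * (b - T) := by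
      rw [setIntegral_const, measureReal_def, Real.volume_Ioc, smul_eq_mul,
        ENNReal.toReal_ofReal (by linarith)]
      ring
    have hmono : ∫ t in Ioc T b, y t ≤ ∫ t in Ioc 0 b, y t := by
      apply setIntegral_mono_set (yint 0 b le_rfl)
      · exact (ae_restrict_iff' measurableSet_Ioc).2
          (Filter.Eventually.of_forall fun x hx => hy x hx.1.le)
      · exact HasSubset.Subset.eventuallyLE
          (fun x hx => ⟨lt_of_le_of_lt hT hx.1, hx.2⟩)
    have h6 := intybound b hb0
    have h7 : ε * (b - T) = B / (2 * M) + 1 := by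
      rw [hb, add_sub_cancel_left, mul_comm, div_mul_cancel₀ _ hε.ne']
    rw [hval] at hconst
    clear_value b B
    linarith
  -- tails of the integral of h are small
  have htail : ∀ ε : ℝ, 0 < ε → ∃ T : ℝ, 0 ≤ T ∧ ∫ t in Ioi T, h t < ε := by
    intro ε hε
    have htend : Tendsto (fun b => ∫ t in (0:ℝ)..b, h t) atTop
        (nhds (∫ t in Ioi (0:ℝ), h t)) :=
      intervalIntegral_tendsto_integral_Ioi 0 hhint tendsto_id
    have : ∀ᶠ b in atTop, (∫ t in Ioi (0:ℝ), h t) - ∫ t in (0:ℝ)..b, h t < ε := by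
      have := htend.const_sub (∫ t in Ioi (0:ℝ), h t)
      rw [sub_self] at this
      exact (this.eventually (eventually_lt_nhds hε))
    obtain ⟨T, hT⟩ := (this.and (eventually_ge_atTop (0:ℝ))).exists
    refine ⟨T, hT.2, ?_⟩
    have hsplit : (∫ t in Ioi (0:ℝ), h t)
        = (∫ t in Ioc 0 T, h t) + ∫ t in Ioi T, h t := by
      rw [← setIntegral_union _ measurableSet_Ioi (hint' 0 T le_rfl)
        (hhint.mono_set (fun x hx => lt_of_le_of_lt hT.2 hx))]
      · rw [Ioc_union_Ioi_eq_Ioi hT.2]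
      · exact Ioc_disjoint_Ioi le_rfl
    have h8 : ∫ t in (0:ℝ)..T, h t = ∫ t in Ioc 0 T, h t :=
      intervalIntegral.integral_of_le hT.2
    have := hT.1
    rw [h8] at this
    linarith
  -- conclude
  rw [Metric.tendsto_atTop]
  intro ε hε
  obtain ⟨T, hT0, hTtail⟩ := htail (ε / 2) (by linarith)
  obtain ⟨a, haT, hay⟩ := small T (ε / 2) hT0 (by linarith)
  refine ⟨a, fun t ht => ?_⟩
  have ha0 : 0 ≤ a := hT0.trans haT
  have h9 := key2 a t ha0 ht
  have h10 := tail a t T hT0 haT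
  have h11 := hy t (ha0.trans ht)
  rw [Real.dist_eq, sub_zero, abs_of_nonneg h11]
  linarith
end
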